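/- Hoffman–Wielandt-type bound for symmetric matrices: for real symmetric n×n matrices A and B, ‖λ(A) − λ(B)‖₂ ≤ ‖A − B‖_F, where λ(·) denotes the ascending eigenvalue vector. -/

import Mathlib

open Matrix

noncomputable def frobNorm {n : ℕ} (M : Matrix (Fin n) (Fin n) ℝ) : ℝ :=
  Real.sqrt (∑ i, ∑ j, (M i j) ^ 2)

noncomputable def l2norm {n : ℕ} (v : Fin n → ℝ) : ℝ :=
  Real.sqrt (∑ i, (v i) ^ 2)

noncomputable def lap {m : Type*} [Fintype m] [DecidableEq m] (M : Matrix m m ℝ) :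
    Matrix m m ℝ :=
  Matrix.diagonal (fun i => ∑ j, M i j) - M

noncomputable def eigsAsc {n : ℕ} {A : Matrix (Fin n) (Fin n) ℝ} (hA : A.IsHermitian) :
    Fin n → ℝ :=
  fun i => hA.eigenvalues (Tuple.sort hA.eigenvalues i)


section HWAux
open Finset

lemma trace_diag_form {n : ℕ} (a b : Fin n → ℝ) (W : Matrix (Fin n) (Fin n) ℝ) :
    Matrix.trace (diagonal a * W * diagonal b * star W) = ∑ i, ∑ j, a i * b j * (W i j) ^ 2 := by
  have hX : ∀ i j, (diagonal a * W * diagonal b) i j = a i * W i j * b j := by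
    intro i j
    rw [Matrix.mul_diagonal, Matrix.diagonal_mul]
  simp only [Matrix.trace, Matrix.diag_apply, Matrix.mul_apply, hX, Matrix.star_apply,
    star_trivial]
  refine Finset.sum_congr rfl fun i _ => Finset.sum_congr rfl fun j _ => by ring

lemma trace_mul_form (n : ℕ) (A B : Matrix (Fin n) (Fin n) ℝ) (hA : A.IsHermitian) (hB : B.IsHermitian) :
    Matrix.trace (A * B) =
      ∑ i, ∑ j, hA.eigenvalues i * hB.eigenvalues j *
        ((star ((hA.eigenvectorUnitary : Matrix (Fin n) (Fin n) ℝ)) *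
          ((hB.eigenvectorUnitary : Matrix (Fin n) (Fin n) ℝ))) i j) ^ 2 := by
  set U : Matrix (Fin n) (Fin n) ℝ := (hA.eigenvectorUnitary : Matrix (Fin n) (Fin n) ℝ) with hU
  set V : Matrix (Fin n) (Fin n) ℝ := (hB.eigenvectorUnitary : Matrix (Fin n) (Fin n) ℝ) with hV
  have hUA : A = U * diagonal hA.eigenvalues * star U := by
    have := hA.spectral_theorem
    simpa [hU] using this
  have hVB : B = V * diagonal hB.eigenvalues * star V := by
    have := hB.spectral_theorem
    simpa [hV] using this
  have hUU : star U * U = 1 := Matrix.mem_unitaryGroup_iff'.mp hA.eigenvectorUnitary.2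
  have key : A * B = U * (diagonal hA.eigenvalues * (star U * V) * diagonal hB.eigenvalues
      * star (star U * V)) * star U := by
    calc A * B = (U * diagonal hA.eigenvalues * star U) * (V * diagonal hB.eigenvalues * star V) :=
          by rw [← hUA, ← hVB]
      _ = _ := by rw [StarMul.star_mul (star U) V, star_star]; simp only [Matrix.mul_assoc, (Matrix.mem_unitaryGroup_iff.mp hA.eigenvectorUnitary.2 : U * star U = 1), Matrix.mul_one, ← hU]
  rw [key, Matrix.trace_mul_cycle, ← Matrix.mul_assoc, hUU, Matrix.one_mul, trace_diag_form]

lemma mono_monovary {n : ℕ} {f g : Fin n → ℝ} (hf : Monotone f) (hg : Monotone g) :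
    Monovary f g := fun i j h =>
  hf (le_of_not_ge fun hle => absurd (hg hle) (not_le_of_gt h))

lemma perm_bound {n : ℕ} (a b : Fin n → ℝ) (σ : Equiv.Perm (Fin n)) :
    ∑ i, a i * b (σ i) ≤ ∑ i, a (Tuple.sort a i) * b (Tuple.sort b i) := by
  have hmono : Monovary (a ∘ Tuple.sort a) (b ∘ Tuple.sort b) :=
    mono_monovary (Tuple.monotone_sort a) (Tuple.monotone_sort b)
  have h1 : ∑ i, a i * b (σ i) = ∑ i, a (Tuple.sort a i)
      * (b ∘ Tuple.sort b) (((Tuple.sort a).trans σ).trans (Tuple.sort b).symm i) := by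
    rw [← Equiv.sum_comp (Tuple.sort a) (fun i => a i * b (σ i))]
    simp [Function.comp]
  rw [h1]
  exact hmono.sum_mul_comp_perm_le_sum_mul

lemma ds_bound {n : ℕ} (a b : Fin n → ℝ) (S : Matrix (Fin n) (Fin n) ℝ)
    (hS : S ∈ doublyStochastic ℝ (Fin n)) :
    ∑ i, ∑ j, a i * b j * S i j ≤ ∑ i, a (Tuple.sort a i) * b (Tuple.sort b i) := by
  obtain ⟨w, hw0, hw1, hwS⟩ := exists_eq_sum_perm_of_mem_doublyStochastic hS
  have hSij : ∀ i j, S i j = ∑ σ : Equiv.Perm (Fin n), w σ * (σ.permMatrix ℝ) i j := by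
    intro i j
    rw [← hwS]
    simp [Matrix.sum_apply]
  have hinner : ∀ σ : Equiv.Perm (Fin n),
      (∑ i, ∑ j, a i * b j * (σ.permMatrix ℝ) i j) = ∑ i, a i * b (σ i) := by
    intro σ
    refine Finset.sum_congr rfl fun i _ => ?_
    simp [Equiv.Perm.permMatrix, PEquiv.toMatrix_apply, Equiv.toPEquiv_apply, mul_ite]
  calc ∑ i, ∑ j, a i * b j * S i j
      = ∑ i, ∑ j, ∑ σ : Equiv.Perm (Fin n), w σ * (a i * b j * (σ.permMatrix ℝ) i j) := by
        refine Finset.sum_congr rfl fun i _ => Finset.sum_congr rfl fun j _ => ?_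
        rw [hSij, Finset.mul_sum]
        exact Finset.sum_congr rfl fun σ _ => by ring
    _ = ∑ σ : Equiv.Perm (Fin n), w σ * ∑ i, a i * b (σ i) := by
        have h1 : ∀ i : Fin n,
            (∑ j, ∑ σ : Equiv.Perm (Fin n), w σ * (a i * b j * (σ.permMatrix ℝ) i j)) =
            ∑ σ : Equiv.Perm (Fin n), ∑ j, w σ * (a i * b j * (σ.permMatrix ℝ) i j) :=
          fun i => Finset.sum_comm
        simp only [h1]
        rw [Finset.sum_comm]
        refine Finset.sum_congr rfl fun σ _ => ?_
        rw [← hinner σ, Finset.mul_sum]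
        exact Finset.sum_congr rfl fun i _ => by rw [Finset.mul_sum]
    _ ≤ ∑ σ : Equiv.Perm (Fin n), w σ * ∑ i, a (Tuple.sort a i) * b (Tuple.sort b i) :=
        Finset.sum_le_sum fun σ _ => mul_le_mul_of_nonneg_left (perm_bound a b σ) (hw0 σ)
    _ = _ := by rw [← Finset.sum_mul, hw1, one_mul]

lemma unitary_sq_ds {n : ℕ} (U V : Matrix.unitaryGroup (Fin n) ℝ) :
    (Matrix.of fun i j => ((star (U : Matrix (Fin n) (Fin n) ℝ) * (V : Matrix (Fin n) (Fin n) ℝ)) i j) ^ 2)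
      ∈ doublyStochastic ℝ (Fin n) := by
  set W : Matrix (Fin n) (Fin n) ℝ := star (U : Matrix (Fin n) (Fin n) ℝ) * V with hW
  have hUU : star (U : Matrix (Fin n) (Fin n) ℝ) * U = 1 := Matrix.mem_unitaryGroup_iff'.mp U.2
  have hUU' : (U : Matrix (Fin n) (Fin n) ℝ) * star (U : Matrix (Fin n) (Fin n) ℝ) = 1 :=
    Matrix.mem_unitaryGroup_iff.mp U.2
  have hVV : star (V : Matrix (Fin n) (Fin n) ℝ) * V = 1 := Matrix.mem_unitaryGroup_iff'.mp V.2
  have hVV' : (V : Matrix (Fin n) (Fin n) ℝ) * star (V : Matrix (Fin n) (Fin n) ℝ) = 1 :=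
    Matrix.mem_unitaryGroup_iff.mp V.2
  have h1 : W * star W = 1 := by
    rw [hW, StarMul.star_mul, star_star, Matrix.mul_assoc, ← Matrix.mul_assoc (V : Matrix (Fin n) (Fin n) ℝ),
      hVV', Matrix.one_mul, hUU]
  have h2 : star W * W = 1 := by
    rw [hW, StarMul.star_mul, star_star, Matrix.mul_assoc, ← Matrix.mul_assoc (U : Matrix (Fin n) (Fin n) ℝ),
      hUU', Matrix.one_mul, hVV]
  rw [mem_doublyStochastic_iff_sum]
  refine ⟨fun i j => sq_nonneg _, fun i => ?_, fun j => ?_⟩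
  · have := congrFun (congrFun h1 i) i
    rw [Matrix.mul_apply] at this
    simp only [Matrix.star_apply, star_trivial, Matrix.one_apply_eq] at this
    simpa [sq] using this
  · have := congrFun (congrFun h2 j) j
    rw [Matrix.mul_apply] at this
    simp only [Matrix.star_apply, star_trivial, Matrix.one_apply_eq] at this
    simpa [sq] using this

lemma trace_mul_le {n : ℕ} (A B : Matrix (Fin n) (Fin n) ℝ)
    (hA : A.IsHermitian) (hB : B.IsHermitian) :
    Matrix.trace (A * B) ≤ ∑ i, hA.eigenvalues (Tuple.sort hA.eigenvalues i)
      * hB.eigenvalues (Tuple.sort hB.eigenvalues i) := by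
  rw [trace_mul_form n A B hA hB]
  exact ds_bound hA.eigenvalues hB.eigenvalues _ (unitary_sq_ds hA.eigenvectorUnitary hB.eigenvectorUnitary)

lemma trace_sq_eq {n : ℕ} (A : Matrix (Fin n) (Fin n) ℝ) (hA : A.IsHermitian) :
    Matrix.trace (A * A) = ∑ i, hA.eigenvalues i ^ 2 := by
  rw [trace_mul_form n A A hA hA, Matrix.mem_unitaryGroup_iff'.mp hA.eigenvectorUnitary.2]
  refine Finset.sum_congr rfl fun i _ => ?_
  simp [Matrix.one_apply, apply_ite (· ^ 2), mul_ite, sq]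

end HWAux

/-- Hoffman–Wielandt-type bound: for real symmetric matrices `A`, `B`,
`‖λ(A) − λ(B)‖₂ ≤ ‖A − B‖_F` with ascending eigenvalue vectors. -/
theorem stmt_6 (n : ℕ) (A B : Matrix (Fin n) (Fin n) ℝ)
    (hA : A.IsHermitian) (hB : B.IsHermitian) :
    l2norm (fun i => eigsAsc hA i - eigsAsc hB i) ≤ frobNorm (A - B) := by
  have hM : (A - B).IsHermitian := hA.sub hB
  have hsym : ∀ i j, (A - B) j i = (A - B) i j := fun i j => by
    simpa using (hM.apply j i).symm
  have hRHS : ∑ i, ∑ j, ((A - B) i j) ^ 2 = Matrix.trace ((A - B) * (A - B)) := by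
    simp only [Matrix.trace, Matrix.diag_apply, Matrix.mul_apply]
    exact Finset.sum_congr rfl fun i _ => Finset.sum_congr rfl fun j _ => by
      rw [hsym i j, sq]
  have hexp : (A - B) * (A - B) = A * A - A * B - B * A + B * B := by
    rw [Matrix.sub_mul, Matrix.mul_sub, Matrix.mul_sub]
    abel
  have htr : Matrix.trace ((A - B) * (A - B))
      = Matrix.trace (A * A) + Matrix.trace (B * B) - 2 * Matrix.trace (A * B) := by
    rw [hexp, Matrix.trace_add, Matrix.trace_sub, Matrix.trace_sub, Matrix.trace_mul_comm B A]
    ring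
  have hsortA : ∑ i, (eigsAsc hA i) ^ 2 = ∑ i, hA.eigenvalues i ^ 2 :=
    Equiv.sum_comp (Tuple.sort hA.eigenvalues) (fun i => hA.eigenvalues i ^ 2)
  have hsortB : ∑ i, (eigsAsc hB i) ^ 2 = ∑ i, hB.eigenvalues i ^ 2 :=
    Equiv.sum_comp (Tuple.sort hB.eigenvalues) (fun i => hB.eigenvalues i ^ 2)
  have hAB : Matrix.trace (A * B) ≤ ∑ i, eigsAsc hA i * eigsAsc hB i :=
    trace_mul_le A B hA hB
  have hkey : ∑ i, (eigsAsc hA i - eigsAsc hB i) ^ 2 ≤ ∑ i, ∑ j, ((A - B) i j) ^ 2 := by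
    have hL : ∑ i, (eigsAsc hA i - eigsAsc hB i) ^ 2
        = ∑ i, (eigsAsc hA i) ^ 2 + ∑ i, (eigsAsc hB i) ^ 2
          - 2 * ∑ i, eigsAsc hA i * eigsAsc hB i := by
      rw [Finset.mul_sum, ← Finset.sum_add_distrib, ← Finset.sum_sub_distrib]
      exact Finset.sum_congr rfl fun i _ => by ring
    rw [hL, hRHS, htr, trace_sq_eq A hA, trace_sq_eq B hB, ← hsortA, ← hsortB]
    linarith
  rw [l2norm, frobNorm]
  exact Real.sqrt_le_sqrt hkey
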